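/- Let ν be a normal weight function on [0,1), i.e., there exist 0 < a ≤ b < ∞ such that ν(s)/(1-s²)^a is almost decreasing and ν(s)/(1-s²)^b is almost increasing on [0,1). Then for all 0 < δ < 1/e², one has ∫_e^∞ e^{-δt}/(t·ν(1-1/t)) dt ≤ C/ν(1-δ), where C depends only on ν. -/

import Mathlib

open MeasureTheory Set Filter

/-- `g` is almost decreasing on `s`. -/
def AlmostDecreasingOn (g : ℝ → ℝ) (s : Set ℝ) : Prop :=
  ∃ C > 0, ∀ x ∈ s, ∀ y ∈ s, x < y → g y ≤ C * g x

/-- `g` is almost increasing on `s`. -/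
def AlmostIncreasingOn (g : ℝ → ℝ) (s : Set ℝ) : Prop :=
  ∃ C > 0, ∀ x ∈ s, ∀ y ∈ s, x < y → g x ≤ C * g y

/-- `ν` is a normal weight on `[0,1)` with exponents `a ≤ b`. -/
def IsNormal (ν : ℝ → ℝ) (a b : ℝ) : Prop :=
  0 < a ∧ a ≤ b ∧ (∀ s ∈ Ico (0:ℝ) 1, 0 < ν s) ∧ ContinuousOn ν (Ico 0 1) ∧
  AlmostDecreasingOn (fun s => ν s / (1 - s ^ 2) ^ a) (Ico 0 1) ∧
  AlmostIncreasingOn (fun s => ν s / (1 - s ^ 2) ^ b) (Ico 0 1)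

/-- Membership in the normal-weight Bloch space `B_ν`. -/
def MemBloch (ν : ℝ → ℝ) (f : ℂ → ℂ) : Prop :=
  DifferentiableOn ℂ f (Metric.ball 0 1) ∧
  BddAbove (Set.range fun z : Metric.ball (0:ℂ) 1 => ν ‖(z : ℂ)‖ * ‖deriv f z‖)

/-- The Bloch norm `|f(0)| + sup ν(|z|)|f'(z)|`. -/
noncomputable def blochNorm (ν : ℝ → ℝ) (f : ℂ → ℂ) : ℝ :=
  ‖f 0‖ + ⨆ z : Metric.ball (0:ℂ) 1, ν ‖(z : ℂ)‖ * ‖deriv f z‖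

/-- `ω̃(t) = ∫_0^t ds/ω(s)`. -/
noncomputable def tildeW (ω : ℝ → ℝ) (t : ℝ) : ℝ := ∫ s in (0:ℝ)..t, 1 / ω s

/-- The generalized integral type Hilbert operator `I_{μ,α+1}`. -/
noncomputable def intHilbert (μ : Measure ℝ) (α : ℝ) (f : ℂ → ℂ) (z : ℂ) : ℂ :=
  ∫ t in Ico (0:ℝ) 1, f (t : ℂ) / (1 - (t : ℂ) * z) ^ ((α : ℂ) + 1) ∂μ

/-- The sublinear generalized integral type Hilbert operator. -/
noncomputable def tildeIntHilbert (μ : Measure ℝ) (α : ℝ) (f : ℂ → ℂ) (z : ℂ) : ℂ :=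
  ∫ t in Ico (0:ℝ) 1, (‖f (t : ℂ)‖ : ℂ) / (1 - (t : ℂ) * z) ^ ((α : ℂ) + 1) ∂μ

/-- Boundedness of an operator from `B_{ν₁}` to `B_{ν₂}`. -/
def IsBddOp (ν₁ ν₂ : ℝ → ℝ) (T : (ℂ → ℂ) → ℂ → ℂ) : Prop :=
  ∃ C > 0, ∀ f, MemBloch ν₁ f → MemBloch ν₂ (T f) ∧ blochNorm ν₂ (T f) ≤ C * blochNorm ν₁ f

/-- Compactness of an operator from `B_{ν₁}` to `B_{ν₂}` (sequential characterization). -/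
def IsCompactOp (ν₁ ν₂ : ℝ → ℝ) (T : (ℂ → ℂ) → ℂ → ℂ) : Prop :=
  IsBddOp ν₁ ν₂ T ∧
  ∀ (h : ℕ → ℂ → ℂ) (M : ℝ), (∀ k, MemBloch ν₁ (h k) ∧ blochNorm ν₁ (h k) ≤ M) →
    TendstoLocallyUniformlyOn (fun k z => h k z) (fun _ => 0) atTop (Metric.ball (0:ℂ) 1) →
    Tendsto (fun k => blochNorm ν₂ (T (h k))) atTop (nhds 0)

lemma aux_integral_exp_neg_mul_Ioi {k : ℝ} (hk : 0 < k) (c : ℝ) :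
    ∫ x in Ioi c, Real.exp (-k * x) = Real.exp (-k * c) / k := by
  have hderiv : ∀ x ∈ Ici c, HasDerivAt (fun x => -Real.exp (-k * x) / k) (Real.exp (-k * x)) x := by
    intro x _
    have h1 : HasDerivAt (fun x : ℝ => -k * x) (-k) x := by
      simpa using (hasDerivAt_id x).const_mul (-k)
    have h2 := (Real.hasDerivAt_exp (-k * x)).comp x h1
    have h3 := (h2.div_const k).neg
    have e1 : (fun x => -Real.exp (-k * x) / k) = -fun x => (Real.exp ∘ HMul.hMul (-k)) x / k := by
      funext y; simp [Function.comp, neg_div]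
    have e2 : Real.exp (-k * x) = -(Real.exp (-k * x) * -k / k) := by
      rw [mul_neg, neg_div, neg_neg, mul_div_assoc, div_self hk.ne', mul_one]
    rw [e1]; exact h3.congr_deriv e2.symm
  have hint : IntegrableOn (fun x => Real.exp (-k * x)) (Ioi c) := exp_neg_integrableOn_Ioi c hk
  have htend : Tendsto (fun x => -Real.exp (-k * x) / k) atTop (nhds 0) := by
    have : Tendsto (fun x : ℝ => -k * x) atTop atBot :=
      Tendsto.const_mul_atTop_of_neg (by linarith) tendsto_id
    have := (Real.tendsto_exp_atBot.comp this)
    simpa using (this.neg.div_const k)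
  have := MeasureTheory.integral_Ioi_of_hasDerivAt_of_tendsto' hderiv hint htend
  rw [this]; ring

set_option maxHeartbeats 2000000 in
theorem stmt0 (ν : ℝ → ℝ) (a b : ℝ) (hν : IsNormal ν a b) :
    ∃ C > 0, ∀ δ : ℝ, 0 < δ → δ < 1 / Real.exp 2 →
      (∫ t in Ioi (Real.exp 1), Real.exp (-δ * t) / (t * ν (1 - 1 / t))) ≤ C / ν (1 - δ) := by
  obtain ⟨ha, hab, hpos, -, ⟨Cd, hCd0, hCd⟩, ⟨Ci, hCi0, hCi⟩⟩ := hν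
  have hb : 0 < b := lt_of_lt_of_le ha hab
  set n : ℕ := ⌈b⌉₊ with hn
  have hbn : b ≤ (n : ℝ) := Nat.le_ceil b
  set Md : ℝ := max Cd 1 with hMd
  set Mi : ℝ := max Ci 1 with hMi
  have hMd1 : (1:ℝ) ≤ Md := le_max_right _ _
  have hMi1 : (1:ℝ) ≤ Mi := le_max_right _ _
  have hMd0 : (0:ℝ) < Md := lt_of_lt_of_le one_pos hMd1
  have hMi0 : (0:ℝ) < Mi := lt_of_lt_of_le one_pos hMi1
  set K₁ : ℝ := Md * 2 ^ a with hK₁def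
  set K₃ : ℝ := Mi * 2 ^ b * (Nat.factorial n : ℝ) * 2 ^ n with hK₃def
  have hK₁ : 0 < K₁ := by
    have : (0:ℝ) < (2:ℝ) ^ a := Real.rpow_pos_of_pos (by norm_num) a
    positivity
  have hK₃ : 0 < K₃ := by
    have h2b : (0:ℝ) < (2:ℝ) ^ b := Real.rpow_pos_of_pos (by norm_num) b
    have hf : (0:ℝ) < (Nat.factorial n : ℝ) := by exact_mod_cast Nat.factorial_pos n
    positivity
  refine ⟨K₁ / a + 2 * K₃, by positivity, ?_⟩
  intro δ hδ hδ2
  have hE2 : (1:ℝ) < Real.exp 1 := by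
    have := Real.exp_lt_exp.mpr (show (0:ℝ) < 1 by norm_num)
    simpa using this
  have hδ1 : δ < 1 := by
    have h1 : 1 / Real.exp 2 < 1 := by
      rw [div_lt_one (Real.exp_pos 2)]
      have := Real.exp_lt_exp.mpr (show (0:ℝ) < 2 by norm_num)
      simpa using this
    linarith
  set c : ℝ := 1 / δ with hc
  have hc0 : 0 < c := by positivity
  have hec : Real.exp 1 < c := by
    have h1 : Real.exp 2 < c := by
      rw [hc]
      have := one_div_lt_one_div_of_lt hδ hδ2
      rwa [one_div_one_div] at this
    have h2 : Real.exp 1 < Real.exp 2 := Real.exp_lt_exp.mpr (by norm_num)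
    linarith
  have hy : (1 - δ) ∈ Ico (0:ℝ) 1 := ⟨by linarith, by linarith⟩
  have hνy : 0 < ν (1 - δ) := hpos _ hy
  have hD0 : 0 < 1 - (1 - δ) ^ 2 := by nlinarith
  have hDa : (1 - (1 - δ) ^ 2) ^ a ≤ 2 ^ a * δ ^ a := by
    rw [← Real.mul_rpow (by norm_num) hδ.le]
    exact Real.rpow_le_rpow hD0.le (by nlinarith) ha.le
  have hDb : (1 - (1 - δ) ^ 2) ^ b ≤ 2 ^ b * δ ^ b := by
    rw [← Real.mul_rpow (by norm_num) hδ.le]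
    exact Real.rpow_le_rpow hD0.le (by nlinarith) hb.le
  set G : ℝ → ℝ := fun t =>
    if t ≤ c then K₁ * δ ^ a * t ^ (a - 1) else K₃ * δ * Real.exp (-(δ/2) * t) with hGdef
  -- pointwise bound
  have key : ∀ t ∈ Ioi (Real.exp 1),
      Real.exp (-δ * t) / (t * ν (1 - 1 / t)) ≤ G t / ν (1 - δ) := by
    intro t ht
    simp only [mem_Ioi] at ht
    have ht1 : 1 < t := lt_trans hE2 ht
    have ht0 : 0 < t := by linarith
    set s : ℝ := 1 - 1 / t with hsdef
    have hts : 0 < 1 / t := by positivity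
    have hts1 : 1 / t < 1 := by rw [div_lt_one ht0]; exact ht1
    have hsmem : s ∈ Ico (0:ℝ) 1 := ⟨by rw [hsdef]; linarith, by rw [hsdef]; linarith⟩
    have hνs : 0 < ν s := hpos _ hsmem
    have hS : 1 - s ^ 2 = (1 / t) * (2 - 1 / t) := by rw [hsdef]; ring
    have hS0 : 0 < 1 - s ^ 2 := by rw [hS]; nlinarith
    have hSt : 1 / t ≤ 1 - s ^ 2 := by rw [hS]; nlinarith
    have hexp1 : Real.exp (-δ * t) ≤ 1 := by
      rw [← Real.exp_zero]; exact Real.exp_le_exp.mpr (by nlinarith)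
    have hta0 : 0 < t ^ a := Real.rpow_pos_of_pos ht0 a
    by_cases htc : t ≤ c
    · simp only [hGdef]
      rw [if_pos htc]
      have hst : s ≤ 1 - δ := by
        have hd : δ ≤ 1 / t := by
          rw [le_div_iff₀ ht0]
          calc δ * t ≤ δ * c := by gcongr
            _ = 1 := by rw [hc]; field_simp
        rw [hsdef]; linarith
      have hga : ν (1 - δ) / (1 - (1-δ)^2) ^ a ≤ Md * (ν s / (1 - s^2) ^ a) := by
        rcases lt_or_eq_of_le hst with h | h
        · refine le_trans (hCd s hsmem (1-δ) hy h) ?_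
          have h0 : 0 ≤ ν s / (1 - s^2) ^ a := by positivity
          exact mul_le_mul_of_nonneg_right (le_max_left _ _) h0
        · rw [← h]
          have h0 : 0 ≤ ν s / (1 - s^2) ^ a := by positivity
          nlinarith
      have hSa0 : 0 < (1 - s^2) ^ a := Real.rpow_pos_of_pos hS0 a
      have hDa0 : 0 < (1 - (1-δ)^2) ^ a := Real.rpow_pos_of_pos hD0 a
      have h1 : ν (1-δ) ≤ Md * (ν s / (1 - s^2) ^ a) * (1 - (1-δ)^2) ^ a := by
        rw [div_le_iff₀ hDa0] at hga; linarith
      have hta : (1/t) ^ a ≤ (1 - s^2) ^ a := Real.rpow_le_rpow (by positivity) hSt ha.le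
      have htinv : ((1:ℝ)/t) ^ a = (t ^ a)⁻¹ := by
        rw [one_div, Real.inv_rpow ht0.le]
      have h2 : ν s / (1 - s^2) ^ a ≤ ν s * t ^ a := by
        rw [div_le_iff₀ hSa0]
        have hone : (1:ℝ) ≤ t ^ a * (1 - s^2)^a := by
          rw [htinv] at hta
          have := mul_le_mul_of_nonneg_left hta hta0.le
          rwa [mul_inv_cancel₀ hta0.ne'] at this
        nlinarith
      have hkey : ν (1-δ) ≤ K₁ * δ^a * t^a * ν s := by
        have hnn : 0 ≤ ν s * t ^ a := by positivity
        calc ν (1-δ) ≤ Md * (ν s / (1-s^2)^a) * (1-(1-δ)^2)^a := h1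
          _ ≤ Md * (ν s * t^a) * (2^a * δ^a) := by
              apply mul_le_mul (mul_le_mul_of_nonneg_left h2 hMd0.le) hDa (by positivity)
              positivity
          _ = K₁ * δ^a * t^a * ν s := by rw [hK₁def]; ring
      rw [div_le_div_iff₀ (by positivity) hνy]
      have hrp : t ^ (a-1) * t = t ^ a := by
        rw [← Real.rpow_add_one ht0.ne' (a-1)]
        norm_num
      calc Real.exp (-δ*t) * ν (1-δ) ≤ 1 * (K₁ * δ^a * t^a * ν s) :=
            mul_le_mul hexp1 hkey hνy.le (by norm_num)
        _ = K₁ * δ^a * (t^(a-1) * t) * ν s := by rw [hrp]; ring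
        _ = K₁ * δ ^ a * t ^ (a-1) * (t * ν s) := by ring
    · push_neg at htc
      simp only [hGdef]
      rw [if_neg (not_le.mpr htc)]
      have hst : 1 - δ < s := by
        have hd : 1 / t < δ := by
          rw [div_lt_iff₀ ht0]
          calc (1:ℝ) = δ * c := by rw [hc]; field_simp
            _ < δ * t := by gcongr
        rw [hsdef]; linarith
      have hgb : ν (1-δ) / (1 - (1-δ)^2) ^ b ≤ Mi * (ν s / (1 - s^2) ^ b) := by
        refine le_trans (hCi (1-δ) hy s hsmem hst) ?_
        have h0 : 0 ≤ ν s / (1 - s^2) ^ b := by positivity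
        exact mul_le_mul_of_nonneg_right (le_max_left _ _) h0
      have hSb0 : 0 < (1 - s^2) ^ b := Real.rpow_pos_of_pos hS0 b
      have hDb0 : 0 < (1 - (1-δ)^2) ^ b := Real.rpow_pos_of_pos hD0 b
      have htb0 : 0 < t ^ b := Real.rpow_pos_of_pos ht0 b
      have h1 : ν (1-δ) ≤ Mi * (ν s / (1 - s^2) ^ b) * (1 - (1-δ)^2) ^ b := by
        rw [div_le_iff₀ hDb0] at hgb; linarith
      have htbv : (1/t) ^ b ≤ (1 - s^2) ^ b := Real.rpow_le_rpow (by positivity) hSt hb.le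
      have htinv : ((1:ℝ)/t) ^ b = (t ^ b)⁻¹ := by
        rw [one_div, Real.inv_rpow ht0.le]
      have h2 : ν s / (1 - s^2) ^ b ≤ ν s * t ^ b := by
        rw [div_le_iff₀ hSb0]
        have hone : (1:ℝ) ≤ t ^ b * (1 - s^2)^b := by
          rw [htinv] at htbv
          have := mul_le_mul_of_nonneg_left htbv htb0.le
          rwa [mul_inv_cancel₀ htb0.ne'] at this
        nlinarith
      have hkey : ν (1-δ) ≤ Mi * 2^b * δ^b * t^b * ν s := by
        calc ν (1-δ) ≤ Mi * (ν s / (1-s^2)^b) * (1-(1-δ)^2)^b := h1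
          _ ≤ Mi * (ν s * t^b) * (2^b * δ^b) := by
              apply mul_le_mul (mul_le_mul_of_nonneg_left h2 hMi0.le) hDb (by positivity)
              positivity
          _ = Mi * 2^b * δ^b * t^b * ν s := by ring
      have hu1 : 1 ≤ δ * t := by
        calc (1:ℝ) = δ * c := by rw [hc]; field_simp
          _ ≤ δ * t := by gcongr
      set E : ℝ := Real.exp (-(δ/2)*t) with hEdef
      have hE0 : 0 < E := Real.exp_pos _
      have hE : E * (δ*t)^n ≤ (Nat.factorial n : ℝ) * 2^n := by
        have hx : (0:ℝ) ≤ (δ/2)*t := by positivity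
        have h := Real.pow_div_factorial_le_exp _ hx n
        have hf0 : (0:ℝ) < (Nat.factorial n : ℝ) := by exact_mod_cast Nat.factorial_pos n
        have h' : ((δ/2)*t)^n ≤ (Nat.factorial n : ℝ) * Real.exp ((δ/2)*t) := by
          rw [div_le_iff₀ hf0] at h; linarith [h]
        have hconv : E * Real.exp ((δ/2)*t) = 1 := by
          rw [hEdef, ← Real.exp_add]; norm_num
        have hmain : E * ((δ/2)*t)^n ≤ (Nat.factorial n : ℝ) := by
          calc E * ((δ/2)*t)^n ≤ E * ((Nat.factorial n : ℝ) * Real.exp ((δ/2)*t)) := by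
                exact mul_le_mul_of_nonneg_left h' hE0.le
            _ = (Nat.factorial n : ℝ) * (E * Real.exp ((δ/2)*t)) := by ring
            _ = (Nat.factorial n : ℝ) := by rw [hconv, mul_one]
        have hpow : (δ*t)^n = ((δ/2)*t)^n * 2^n := by
          rw [← mul_pow]; ring_nf
        rw [hpow]
        calc E * (((δ/2)*t)^n * 2^n) = (E * ((δ/2)*t)^n) * 2^n := by ring
          _ ≤ (Nat.factorial n : ℝ) * 2^n := by
              exact mul_le_mul_of_nonneg_right hmain (by positivity)
      have hfinal : E * (δ^b * t^b) ≤ (Nat.factorial n : ℝ) * 2^n * (δ * t) := by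
        have hmul : δ^b * t^b = (δ*t)^b := (Real.mul_rpow hδ.le ht0.le).symm
        rw [hmul]
        calc E * (δ*t)^b ≤ E * (δ*t)^(n:ℝ) := by
              exact mul_le_mul_of_nonneg_left
                (Real.rpow_le_rpow_of_exponent_le hu1 hbn) hE0.le
          _ = E * (δ*t)^n := by rw [Real.rpow_natCast]
          _ ≤ (Nat.factorial n : ℝ)*2^n := hE
          _ ≤ (Nat.factorial n : ℝ)*2^n * (δ*t) := le_mul_of_one_le_right (by positivity) hu1
      rw [div_le_div_iff₀ (by positivity) hνy]
      have hEE : Real.exp (-δ*t) = E * E := by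
        rw [hEdef, ← Real.exp_add]; ring_nf
      have hcoef : 0 ≤ Mi * 2^b * ν s * E := by
        have h2b : (0:ℝ) ≤ (2:ℝ)^b := (Real.rpow_pos_of_pos (by norm_num) b).le
        have := mul_nonneg (mul_nonneg (mul_nonneg hMi0.le h2b) hνs.le) hE0.le
        exact this
      calc Real.exp (-δ*t) * ν (1-δ) = E * E * ν (1-δ) := by rw [hEE]
        _ ≤ E * E * (Mi * 2^b * δ^b * t^b * ν s) := by
            exact mul_le_mul_of_nonneg_left hkey (by positivity)
        _ = (Mi * 2^b * ν s * E) * (E * (δ^b * t^b)) := by ring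
        _ ≤ (Mi * 2^b * ν s * E) * ((Nat.factorial n : ℝ) * 2^n * (δ * t)) :=
            mul_le_mul_of_nonneg_left hfinal hcoef
        _ = K₃ * δ * E * (t * ν s) := by rw [hK₃def]; ring
  -- integrability of G on the two pieces
  have hG1 : IntegrableOn G (Ioc (Real.exp 1) c) := by
    have h1 : IntegrableOn (fun t : ℝ => K₁ * δ ^ a * t ^ (a - 1)) (Ioc (Real.exp 1) c) := by
      have := (intervalIntegral.intervalIntegrable_rpow' (a := Real.exp 1) (b := c)
        (r := a - 1) (by linarith))
      rw [intervalIntegrable_iff_integrableOn_Ioc_of_le hec.le] at this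
      exact (this.const_mul _)
    exact h1.congr_fun (fun t ht => by simp [hGdef, if_pos ht.2]) measurableSet_Ioc
  have hG2 : IntegrableOn G (Ioi c) := by
    have h1 : IntegrableOn (fun t : ℝ => K₃ * δ * Real.exp (-(δ/2) * t)) (Ioi c) :=
      ((exp_neg_integrableOn_Ioi c (by positivity : (0:ℝ) < δ/2))).const_mul _
    exact h1.congr_fun (fun t ht => by simp [hGdef, if_neg (not_le.mpr (show c < t from ht))]) measurableSet_Ioi
  have hGint : IntegrableOn G (Ioi (Real.exp 1)) := by
    rw [← Ioc_union_Ioi_eq_Ioi hec.le]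
    exact hG1.union hG2
  -- value bound
  have hGval : (∫ t in Ioi (Real.exp 1), G t) ≤ K₁ / a + 2 * K₃ := by
    have hsplit : (∫ t in Ioi (Real.exp 1), G t)
        = (∫ t in Ioc (Real.exp 1) c, G t) + ∫ t in Ioi c, G t := by
      rw [← Ioc_union_Ioi_eq_Ioi hec.le]
      exact setIntegral_union (Ioc_disjoint_Ioi le_rfl) measurableSet_Ioi hG1 hG2
    have hI1 : (∫ t in Ioc (Real.exp 1) c, G t) ≤ K₁ / a := by
      have e1 : (∫ t in Ioc (Real.exp 1) c, G t)
          = ∫ t in Ioc (Real.exp 1) c, K₁ * δ ^ a * t ^ (a - 1) :=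
        setIntegral_congr_fun measurableSet_Ioc (fun t ht => by simp [hGdef, if_pos ht.2])
      have e2 : (∫ t in Ioc (Real.exp 1) c, t ^ (a - 1))
          = (c ^ a - Real.exp 1 ^ a) / a := by
        rw [← intervalIntegral.integral_of_le hec.le,
          integral_rpow (Or.inl (by linarith : (-1:ℝ) < a - 1))]
        norm_num
      rw [e1, MeasureTheory.integral_const_mul, e2]
      have hca : δ ^ a * c ^ a = 1 := by
        rw [← Real.mul_rpow hδ.le hc0.le, hc, mul_one_div, div_self hδ.ne', Real.one_rpow]
      have hea : 0 ≤ Real.exp 1 ^ a := (Real.rpow_pos_of_pos (Real.exp_pos 1) a).le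
      have hstep : K₁ * δ ^ a * ((c ^ a - Real.exp 1 ^ a) / a) ≤ K₁ * δ ^ a * (c ^ a / a) := by
        gcongr
        linarith
      refine hstep.trans ?_
      rw [show K₁ * δ ^ a * (c ^ a / a) = K₁ * (δ ^ a * c ^ a) / a by ring, hca, mul_one]
    have hI2 : (∫ t in Ioi c, G t) ≤ 2 * K₃ := by
      have e1 : (∫ t in Ioi c, G t) = ∫ t in Ioi c, K₃ * δ * Real.exp (-(δ/2) * t) :=
        setIntegral_congr_fun measurableSet_Ioi
          (fun t ht => by simp [hGdef, if_neg (not_le.mpr (show c < t from ht))])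
      rw [e1, MeasureTheory.integral_const_mul,
        aux_integral_exp_neg_mul_Ioi (by positivity : (0:ℝ) < δ/2) c]
      have hexp : Real.exp (-(δ/2) * c) ≤ 1 := by
        rw [← Real.exp_zero]
        apply Real.exp_le_exp.mpr
        nlinarith [hc0]
      have h2 : Real.exp (-(δ/2)*c)/(δ/2) ≤ 2/δ := by
        rw [div_le_div_iff₀ (by positivity) hδ]
        nlinarith
      calc K₃ * δ * (Real.exp (-(δ/2)*c)/(δ/2)) ≤ K₃ * δ * (2/δ) := by
            apply mul_le_mul_of_nonneg_left h2 (by positivity)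
        _ = 2 * K₃ := by field_simp
    rw [hsplit]; linarith
  -- conclude
  by_cases hInt : IntegrableOn (fun t => Real.exp (-δ * t) / (t * ν (1 - 1 / t)))
      (Ioi (Real.exp 1))
  · calc (∫ t in Ioi (Real.exp 1), Real.exp (-δ * t) / (t * ν (1 - 1 / t)))
        ≤ ∫ t in Ioi (Real.exp 1), G t / ν (1 - δ) :=
          setIntegral_mono_on hInt (hGint.div_const _) measurableSet_Ioi key
      _ = (∫ t in Ioi (Real.exp 1), G t) / ν (1 - δ) := integral_div _ _
      _ ≤ (K₁ / a + 2 * K₃) / ν (1 - δ) := by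
          gcongr
  · rw [integral_undef hInt]
    positivity
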